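/- For all a, b > 0 there exists c > 0 depending only on a and b such that for every n ≥ 1 and every n×n real matrix A = I + X which is symmetric positive definite with X_{jj} = 0 for all j, |X_{jk}| ≤ a/n for all j,k, and ‖A^{−1}‖₂ ≤ b, one has: ‖A^{−1}‖_∞ = ‖A^{−1}‖₁ ≤ c, and every entry of the matrix X' = A^{−1} − I satisfies |X'_{jk}| ≤ c/n. -/

import Mathlib

open MeasureTheory Matrix Finset

/-- The ℓ^p norm on `Fin n → ℝ` (with `p = ⊤` the maximum norm). -/
noncomputable def lpnorm {n : ℕ} (p : ENNReal) (x : Fin n → ℝ) : ℝ :=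
  if p = ⊤ then ⨆ j, |x j| else (∑ j, |x j| ^ p.toReal) ^ (1 / p.toReal)

/-- The operator norm induced by the ℓ^p vector norm. -/
noncomputable def opNorm {n : ℕ} (p : ENNReal) (A : Matrix (Fin n) (Fin n) ℝ) : ℝ :=
  sSup {c : ℝ | ∃ x : Fin n → ℝ, x ≠ 0 ∧ c = lpnorm p (A.mulVec x) / lpnorm p x}

/-- Condition (A): `A = I + X` is symmetric positive definite, `X` has zero diagonal,
`|X_{jk}| ≤ a/n` for all `j,k`, and `‖A⁻¹‖₂ ≤ b`. -/
def CondA {n : ℕ} (a b : ℝ) (A : Matrix (Fin n) (Fin n) ℝ) : Prop :=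
  A.IsSymm ∧ A.PosDef ∧ (∀ j, A j j = 1) ∧
    (∀ j k, j ≠ k → |A j k| ≤ a / n) ∧ opNorm 2 A⁻¹ ≤ b

/-- The cube `U_n(ρ) = {θ ∈ ℝⁿ : |θ_j| ≤ ρ for all j}`. -/
def Uset (n : ℕ) (ρ : ℝ) : Set (Fin n → ℝ) := {θ | ∀ j, |θ j| ≤ ρ}

/-- Conditions (H1)–(H2): `H` is C¹ with `H(θ) ≤ c₁ θᵀAθ/n` and
`‖∇H(θ)‖_∞ ≤ c₂ (‖θ‖_∞³ + ‖θ‖_∞)/n`.  (The norm `‖θ‖` on `Fin n → ℝ` is the sup norm.) -/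
def CondH {n : ℕ} (c₁ c₂ : ℝ) (A : Matrix (Fin n) (Fin n) ℝ) (H : (Fin n → ℝ) → ℝ) : Prop :=
  ContDiff ℝ 1 H ∧
    (∀ θ, H θ ≤ c₁ * (θ ⬝ᵥ A.mulVec θ) / n) ∧
    (∀ θ (j : Fin n), |fderiv ℝ H θ (Pi.single j 1)| ≤ c₂ * (‖θ‖ ^ 3 + ‖θ‖) / n)

/-! ### Auxiliary lemmas -/

lemma lpnorm_top_def {n : ℕ} (x : Fin n → ℝ) : lpnorm ⊤ x = ⨆ j, |x j| := by
  simp [lpnorm]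

lemma lpnorm_one_def {n : ℕ} (x : Fin n → ℝ) : lpnorm 1 x = ∑ j, |x j| := by
  simp [lpnorm, Real.rpow_one]

lemma lpnorm_two_def {n : ℕ} (x : Fin n → ℝ) :
    lpnorm 2 x = Real.sqrt (∑ j, x j ^ 2) := by
  have h2 : ((2 : ENNReal)).toReal = 2 := by norm_num
  rw [lpnorm, if_neg (by norm_num), h2, Real.sqrt_eq_rpow]
  congr 1
  refine Finset.sum_congr rfl fun j _ => ?_
  rw [show (2:ℝ) = ((2:ℕ):ℝ) by norm_num, Real.rpow_natCast, sq_abs]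

lemma lpnorm_top_nonneg {n : ℕ} (x : Fin n → ℝ) : 0 ≤ lpnorm ⊤ x := by
  rw [lpnorm_top_def]; exact Real.iSup_nonneg fun j => abs_nonneg _

lemma lpnorm_one_nonneg {n : ℕ} (x : Fin n → ℝ) : 0 ≤ lpnorm 1 x := by
  rw [lpnorm_one_def]; exact Finset.sum_nonneg fun j _ => abs_nonneg _

/-- Every element of the defining set of `opNorm ⊤ M` is at most the max row sum. -/
lemma opNorm_top_mem_le {n : ℕ} (M : Matrix (Fin n) (Fin n) ℝ) (c : ℝ)
    (hc : c ∈ {c : ℝ | ∃ x : Fin n → ℝ, x ≠ 0 ∧ c = lpnorm ⊤ (M.mulVec x) / lpnorm ⊤ x}) :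
    c ≤ ⨆ j, ∑ k, |M j k| := by
  obtain ⟨x, hx, rfl⟩ := hc
  obtain ⟨j₀, hj₀⟩ := Function.ne_iff.mp hx
  haveI : Nonempty (Fin n) := ⟨j₀⟩
  set R : ℝ := ⨆ j, ∑ k, |M j k| with hR
  have hR0 : 0 ≤ R := Real.iSup_nonneg fun j => Finset.sum_nonneg fun k _ => abs_nonneg _
  have hxpos : 0 < lpnorm ⊤ x := by
    rw [lpnorm_top_def]
    calc (0:ℝ) < |x j₀| := abs_pos.mpr (by simpa using hj₀)
    _ ≤ ⨆ j, |x j| := le_ciSup (f := fun j => |x j|) (Set.finite_range _).bddAbove j₀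
  rw [div_le_iff₀ hxpos, lpnorm_top_def]
  refine Real.iSup_le (fun i => ?_) (mul_nonneg hR0 (lpnorm_top_nonneg x))
  have hxk : ∀ k, |x k| ≤ lpnorm ⊤ x := by
    intro k; rw [lpnorm_top_def]
    exact le_ciSup (f := fun j => |x j|) (Set.finite_range _).bddAbove k
  calc |M.mulVec x i| = |∑ k, M i k * x k| := by
        simp [Matrix.mulVec, dotProduct]
    _ ≤ ∑ k, |M i k * x k| := Finset.abs_sum_le_sum_abs _ _
    _ = ∑ k, |M i k| * |x k| := by simp [abs_mul]
    _ ≤ ∑ k, |M i k| * lpnorm ⊤ x :=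
        Finset.sum_le_sum fun k _ => mul_le_mul_of_nonneg_left (hxk k) (abs_nonneg _)
    _ = (∑ k, |M i k|) * lpnorm ⊤ x := by rw [Finset.sum_mul]
    _ ≤ R * lpnorm ⊤ x := by
        have : ∑ k, |M i k| ≤ R :=
          le_ciSup (f := fun j => ∑ k, |M j k|) (Set.finite_range _).bddAbove i
        exact mul_le_mul_of_nonneg_right this (lpnorm_top_nonneg x)

/-- The `∞`-operator norm is the maximum absolute row sum. -/
lemma opNorm_top_eq {n : ℕ} (M : Matrix (Fin n) (Fin n) ℝ) :
    opNorm ⊤ M = ⨆ j, ∑ k, |M j k| := by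
  set R : ℝ := ⨆ j, ∑ k, |M j k| with hR
  have hR0 : 0 ≤ R := Real.iSup_nonneg fun j => Finset.sum_nonneg fun k _ => abs_nonneg _
  refine le_antisymm (Real.sSup_le (fun c hc => opNorm_top_mem_le M c hc) hR0) ?_
  by_cases hn : n = 0
  · subst hn
    have : R = 0 := by
      rw [hR]; exact le_antisymm (Real.iSup_nonpos (fun j => j.elim0)) hR0
    rw [this]
    exact Real.sSup_nonneg fun c hc => by
      obtain ⟨x, hx, rfl⟩ := hc
      exact div_nonneg (lpnorm_top_nonneg _) (lpnorm_top_nonneg _)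
  · haveI : Nonempty (Fin n) := ⟨⟨0, Nat.pos_of_ne_zero hn⟩⟩
    obtain ⟨j₀, hj₀⟩ := Finite.exists_max (fun j => ∑ k, |M j k|)
    have hRj : R ≤ ∑ k, |M j₀ k| := Real.iSup_le hj₀
      (Finset.sum_nonneg fun k _ => abs_nonneg _)
    set x : Fin n → ℝ := fun k => if M j₀ k < 0 then (-1 : ℝ) else 1 with hxdef
    have hx1 : ∀ k, |x k| = 1 := by
      intro k; rw [hxdef]; dsimp only; split <;> norm_num
    have hx : x ≠ 0 := by
      intro h
      have := congrFun h j₀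
      have h1 := hx1 j₀
      rw [this] at h1; simp at h1
    have hxn : lpnorm ⊤ x = 1 := by
      rw [lpnorm_top_def]
      simp only [hx1]
      exact ciSup_const
    have hmx : M.mulVec x j₀ = ∑ k, |M j₀ k| := by
      simp only [Matrix.mulVec, dotProduct]
      refine Finset.sum_congr rfl fun k _ => ?_
      rw [hxdef]; dsimp only
      by_cases h : M j₀ k < 0
      · rw [if_pos h, abs_of_neg h]; ring
      · rw [if_neg h, abs_of_nonneg (not_lt.mp h)]; ring
    have hmem : lpnorm ⊤ (M.mulVec x) / lpnorm ⊤ x ∈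
        {c : ℝ | ∃ y : Fin n → ℝ, y ≠ 0 ∧ c = lpnorm ⊤ (M.mulVec y) / lpnorm ⊤ y} :=
      ⟨x, hx, rfl⟩
    have hle : R ≤ lpnorm ⊤ (M.mulVec x) / lpnorm ⊤ x := by
      rw [hxn, div_one, lpnorm_top_def]
      calc R ≤ ∑ k, |M j₀ k| := hRj
        _ = |M.mulVec x j₀| := by
            rw [hmx, abs_of_nonneg (Finset.sum_nonneg fun k _ => abs_nonneg _)]
        _ ≤ ⨆ j, |M.mulVec x j| :=
            le_ciSup (f := fun j => |M.mulVec x j|) (Set.finite_range _).bddAbove j₀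
    exact hle.trans (le_csSup ⟨R, fun c hc => opNorm_top_mem_le M c hc⟩ hmem)

/-- Every element of the defining set of `opNorm 1 M` is at most the max column sum. -/
lemma opNorm_one_mem_le {n : ℕ} (M : Matrix (Fin n) (Fin n) ℝ) (c : ℝ)
    (hc : c ∈ {c : ℝ | ∃ x : Fin n → ℝ, x ≠ 0 ∧ c = lpnorm 1 (M.mulVec x) / lpnorm 1 x}) :
    c ≤ ⨆ k, ∑ j, |M j k| := by
  obtain ⟨x, hx, rfl⟩ := hc
  obtain ⟨j₀, hj₀⟩ := Function.ne_iff.mp hx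
  haveI : Nonempty (Fin n) := ⟨j₀⟩
  set C : ℝ := ⨆ k, ∑ j, |M j k| with hC
  have hC0 : 0 ≤ C := Real.iSup_nonneg fun k => Finset.sum_nonneg fun j _ => abs_nonneg _
  have hxpos : 0 < lpnorm 1 x := by
    rw [lpnorm_one_def]
    have : 0 < |x j₀| := abs_pos.mpr (by simpa using hj₀)
    exact Finset.sum_pos' (fun k _ => abs_nonneg _) ⟨j₀, Finset.mem_univ _, this⟩
  rw [div_le_iff₀ hxpos, lpnorm_one_def, lpnorm_one_def]
  calc ∑ j, |M.mulVec x j| = ∑ j, |∑ k, M j k * x k| := by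
        simp [Matrix.mulVec, dotProduct]
    _ ≤ ∑ j, ∑ k, |M j k| * |x k| := by
        refine Finset.sum_le_sum fun j _ => ?_
        refine (Finset.abs_sum_le_sum_abs _ _).trans ?_
        simp [abs_mul]
    _ = ∑ k, (∑ j, |M j k|) * |x k| := by
        rw [Finset.sum_comm]
        simp [Finset.sum_mul]
    _ ≤ ∑ k, C * |x k| := by
        refine Finset.sum_le_sum fun k _ => ?_
        exact mul_le_mul_of_nonneg_right
          (le_ciSup (f := fun k => ∑ j, |M j k|) (Set.finite_range _).bddAbove k)
          (abs_nonneg _)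
    _ = C * ∑ k, |x k| := by rw [Finset.mul_sum]

/-- The `1`-operator norm is the maximum absolute column sum. -/
lemma opNorm_one_eq {n : ℕ} (M : Matrix (Fin n) (Fin n) ℝ) :
    opNorm 1 M = ⨆ k, ∑ j, |M j k| := by
  set C : ℝ := ⨆ k, ∑ j, |M j k| with hC
  have hC0 : 0 ≤ C := Real.iSup_nonneg fun k => Finset.sum_nonneg fun j _ => abs_nonneg _
  refine le_antisymm (Real.sSup_le (fun c hc => opNorm_one_mem_le M c hc) hC0) ?_
  by_cases hn : n = 0
  · subst hn
    have : C = 0 := by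
      rw [hC]; exact le_antisymm (Real.iSup_nonpos (fun j => j.elim0)) hC0
    rw [this]
    exact Real.sSup_nonneg fun c hc => by
      obtain ⟨x, hx, rfl⟩ := hc
      exact div_nonneg (lpnorm_one_nonneg _) (lpnorm_one_nonneg _)
  · haveI : Nonempty (Fin n) := ⟨⟨0, Nat.pos_of_ne_zero hn⟩⟩
    obtain ⟨k₀, hk₀⟩ := Finite.exists_max (fun k => ∑ j, |M j k|)
    have hCk : C ≤ ∑ j, |M j k₀| := Real.iSup_le hk₀
      (Finset.sum_nonneg fun j _ => abs_nonneg _)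
    set x : Fin n → ℝ := Pi.single k₀ 1 with hxdef
    have hx : x ≠ 0 := by
      intro h
      have := congrFun h k₀
      rw [hxdef] at this; simp at this
    have hxn : lpnorm 1 x = 1 := by
      rw [lpnorm_one_def, hxdef]
      have : ∀ j, |Pi.single (M := fun _ : Fin n => ℝ) k₀ 1 j| = if j = k₀ then 1 else 0 := by
        intro j
        rcases eq_or_ne j k₀ with rfl | h
        · simp
        · simp [Pi.single_eq_of_ne h, h]
      simp only [this]
      simp
    have hmx : M.mulVec x = fun i => M i k₀ := by
      rw [hxdef]; funext i; simp [Matrix.mulVec_single]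
    have hmem : lpnorm 1 (M.mulVec x) / lpnorm 1 x ∈
        {c : ℝ | ∃ y : Fin n → ℝ, y ≠ 0 ∧ c = lpnorm 1 (M.mulVec y) / lpnorm 1 y} :=
      ⟨x, hx, rfl⟩
    have hle : C ≤ lpnorm 1 (M.mulVec x) / lpnorm 1 x := by
      rw [hxn, div_one, lpnorm_one_def, hmx]
      exact hCk
    exact hle.trans (le_csSup ⟨C, fun c hc => opNorm_one_mem_le M c hc⟩ hmem)

lemma lpnorm_two_pos {n : ℕ} {x : Fin n → ℝ} (hx : x ≠ 0) : 0 < lpnorm 2 x := by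
  obtain ⟨j₀, hj₀⟩ := Function.ne_iff.mp hx
  rw [lpnorm_two_def]
  refine Real.sqrt_pos.mpr ?_
  refine Finset.sum_pos' (fun k _ => sq_nonneg _) ⟨j₀, Finset.mem_univ _, ?_⟩
  have : x j₀ ≠ 0 := by simpa using hj₀
  rw [← sq_abs]
  exact pow_pos (abs_pos.mpr this) 2

/-- Pointwise ℓ² bound from the operator 2-norm bound. -/
lemma mulVec_l2_le {n : ℕ} (M : Matrix (Fin n) (Fin n) ℝ) {b : ℝ} (hb : 0 ≤ b)
    (h : opNorm 2 M ≤ b) (x : Fin n → ℝ) :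
    Real.sqrt (∑ j, M.mulVec x j ^ 2) ≤ b * Real.sqrt (∑ j, x j ^ 2) := by
  by_cases hx : x = 0
  · simp [hx]
  · set F : ℝ := Real.sqrt (∑ j, ∑ k, M j k ^ 2) with hF
    have key : ∀ y : Fin n → ℝ,
        Real.sqrt (∑ j, M.mulVec y j ^ 2) ≤ F * Real.sqrt (∑ j, y j ^ 2) := by
      intro y
      have h1 : ∀ j, M.mulVec y j ^ 2 ≤ (∑ k, M j k ^ 2) * (∑ k, y k ^ 2) := by
        intro j
        have : M.mulVec y j = ∑ k, M j k * y k := by simp [Matrix.mulVec, dotProduct]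
        rw [this]
        exact Finset.sum_mul_sq_le_sq_mul_sq _ _ _
      calc Real.sqrt (∑ j, M.mulVec y j ^ 2)
          ≤ Real.sqrt (∑ j, (∑ k, M j k ^ 2) * (∑ k, y k ^ 2)) :=
            Real.sqrt_le_sqrt (Finset.sum_le_sum fun j _ => h1 j)
        _ = Real.sqrt ((∑ j, ∑ k, M j k ^ 2) * (∑ k, y k ^ 2)) := by
            rw [← Finset.sum_mul]
        _ = F * Real.sqrt (∑ k, y k ^ 2) := by
            rw [Real.sqrt_mul (x := ∑ j, ∑ k, M j k ^ 2) (Finset.sum_nonneg fun j _ =>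
              Finset.sum_nonneg fun k _ => sq_nonneg _)]
    have hbdd : ∀ c ∈ {c : ℝ | ∃ y : Fin n → ℝ, y ≠ 0 ∧
        c = lpnorm 2 (M.mulVec y) / lpnorm 2 y}, c ≤ F := by
      rintro c ⟨y, hy, rfl⟩
      have hypos : 0 < lpnorm 2 y := lpnorm_two_pos hy
      rw [div_le_iff₀ hypos, lpnorm_two_def, lpnorm_two_def]
      exact key y
    have hmem : lpnorm 2 (M.mulVec x) / lpnorm 2 x ∈
        {c : ℝ | ∃ y : Fin n → ℝ, y ≠ 0 ∧ c = lpnorm 2 (M.mulVec y) / lpnorm 2 y} :=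
      ⟨x, hx, rfl⟩
    have hle : lpnorm 2 (M.mulVec x) / lpnorm 2 x ≤ b := by
      have h1 : lpnorm 2 (M.mulVec x) / lpnorm 2 x ≤ opNorm 2 M :=
        le_csSup ⟨F, hbdd⟩ hmem
      exact h1.trans h
    have hxpos : 0 < lpnorm 2 x := lpnorm_two_pos hx
    rw [div_le_iff₀ hxpos, lpnorm_two_def, lpnorm_two_def] at hle
    exact hle

theorem inverse_matrix_estimates (a b : ℝ) (ha : 0 < a) (hb : 0 < b) :
    ∃ c : ℝ, 0 < c ∧
      ∀ (n : ℕ) (A : Matrix (Fin n) (Fin n) ℝ), CondA a b A →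
        (opNorm ⊤ A⁻¹ = opNorm 1 A⁻¹ ∧ opNorm ⊤ A⁻¹ ≤ c) ∧
        (∀ j k, |(A⁻¹ - 1) j k| ≤ c / n) := by
  refine ⟨1 + a + a ^ 2 * b, by positivity, ?_⟩
  rintro n A ⟨hsym, hpd, hdiag, hoff, hop2⟩
  have hdet : IsUnit A.det := isUnit_iff_ne_zero.mpr hpd.det_pos.ne'
  have hAinv : A⁻¹ * A = 1 := Matrix.nonsing_inv_mul A hdet
  have hAinv' : A * A⁻¹ = 1 := Matrix.mul_nonsing_inv A hdet
  set X : Matrix (Fin n) (Fin n) ℝ := A - 1 with hXdef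
  set X' : Matrix (Fin n) (Fin n) ℝ := A⁻¹ - 1 with hX'def
  -- entrywise bound on X
  have hX : ∀ j k, |X j k| ≤ a / n := by
    intro j k
    have hn : (0:ℝ) < n := by exact_mod_cast j.pos
    rcases eq_or_ne j k with rfl | hjk
    · have : X j j = 0 := by simp [hXdef, Matrix.sub_apply, hdiag j]
      rw [this]
      simp only [abs_zero]
      positivity
    · have : X j k = A j k := by simp [hXdef, Matrix.sub_apply, Matrix.one_apply_ne hjk]
      rw [this]
      exact hoff j k hjk
  -- row ℓ² bound
  have hrow : ∀ j : Fin n, Real.sqrt (∑ k, X j k ^ 2) ≤ a / Real.sqrt n := by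
    intro j
    have hn : (0:ℝ) < n := by exact_mod_cast j.pos
    have h1 : ∑ k, X j k ^ 2 ≤ (n : ℝ) * (a / n) ^ 2 := by
      calc ∑ k, X j k ^ 2 ≤ ∑ _k : Fin n, (a / n) ^ 2 := by
            refine Finset.sum_le_sum fun k _ => ?_
            have := hX j k
            calc X j k ^ 2 = |X j k| ^ 2 := (sq_abs _).symm
              _ ≤ (a / n) ^ 2 := by
                  have h0 : (0:ℝ) ≤ |X j k| := abs_nonneg _
                  nlinarith
        _ = (n : ℝ) * (a / n) ^ 2 := by simp [Finset.sum_const, Finset.card_univ]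
    have h2 : (n : ℝ) * (a / n) ^ 2 = (a / Real.sqrt n) ^ 2 := by
      rw [div_pow, div_pow, Real.sq_sqrt hn.le]
      field_simp
    calc Real.sqrt (∑ k, X j k ^ 2) ≤ Real.sqrt ((a / Real.sqrt n) ^ 2) := by
          rw [← h2]; exact Real.sqrt_le_sqrt h1
      _ = a / Real.sqrt n := Real.sqrt_sq (by positivity)
  -- X is symmetric
  have hXsym : ∀ j k, X j k = X k j := by
    intro j k
    have hA : A j k = A k j := hsym.apply k j
    have h1 : (1 : Matrix (Fin n) (Fin n) ℝ) j k = (1 : Matrix (Fin n) (Fin n) ℝ) k j := by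
      rcases eq_or_ne j k with rfl | h
      · rfl
      · rw [Matrix.one_apply_ne h, Matrix.one_apply_ne (Ne.symm h)]
    simp [hXdef, Matrix.sub_apply, hA, h1]
  -- column ℓ² bound on X'
  have hcol : ∀ k : Fin n, Real.sqrt (∑ i, X' i k ^ 2) ≤ b * (a / Real.sqrt n) := by
    intro k
    have e2 : X' = -(A⁻¹ * X) := by
      rw [hX'def, hXdef, Matrix.mul_sub, hAinv, Matrix.mul_one]
      abel
    have hXk : ∀ i, X' i k = -(A⁻¹.mulVec (fun m => X m k) i) := by
      intro i
      rw [e2]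
      simp [Matrix.neg_apply, Matrix.mul_apply, Matrix.mulVec, dotProduct]
    have hsq : ∑ i, X' i k ^ 2 = ∑ i, A⁻¹.mulVec (fun m => X m k) i ^ 2 := by
      refine Finset.sum_congr rfl fun i _ => ?_
      rw [hXk i, neg_sq]
    rw [hsq]
    have h1 := mulVec_l2_le A⁻¹ hb.le hop2 (fun m => X m k)
    refine h1.trans ?_
    have h2 : Real.sqrt (∑ m, X m k ^ 2) ≤ a / Real.sqrt n := by
      have : ∑ m, X m k ^ 2 = ∑ m, X k m ^ 2 := by
        refine Finset.sum_congr rfl fun m _ => ?_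
        rw [hXsym m k]
      rw [this]
      exact hrow k
    exact mul_le_mul_of_nonneg_left h2 hb.le
  -- entrywise bound on X'
  have hentry : ∀ j k, |X' j k| ≤ (a + a ^ 2 * b) / n := by
    intro j k
    have hnn : 0 < n := j.pos
    have hn : (0:ℝ) < n := by exact_mod_cast hnn
    have hsn : (0:ℝ) < Real.sqrt n := Real.sqrt_pos.mpr hn
    have e3 : X' = -X - X * X' := by
      have e1 : X * X' = 1 - A - A⁻¹ + 1 := by
        rw [hXdef, hX'def, Matrix.sub_mul, Matrix.mul_sub, Matrix.mul_sub, hAinv',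
          Matrix.mul_one, Matrix.one_mul, Matrix.one_mul]
        abel
      rw [e1, hX'def, hXdef]
      abel
    have hid : X' j k = -(X j k) - ∑ i, X j i * X' i k := by
      have := congrFun (congrFun e3 j) k
      simpa [Matrix.sub_apply, Matrix.neg_apply, Matrix.mul_apply] using this
    have hcs : |∑ i, X j i * X' i k| ≤
        Real.sqrt (∑ i, X j i ^ 2) * Real.sqrt (∑ i, X' i k ^ 2) := by
      refine abs_le.mpr ⟨?_, Real.sum_mul_le_sqrt_mul_sqrt _ _ _⟩
      have h1 := Real.sum_mul_le_sqrt_mul_sqrt Finset.univ (fun i => -X j i)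
        (fun i => X' i k)
      simp only [neg_mul, Finset.sum_neg_distrib, neg_sq] at h1
      linarith
    have hprod : Real.sqrt (∑ i, X j i ^ 2) * Real.sqrt (∑ i, X' i k ^ 2) ≤
        (a / Real.sqrt n) * (b * (a / Real.sqrt n)) := by
      have h1 := hrow j
      have h2 := hcol k
      have h3 : (0:ℝ) ≤ Real.sqrt (∑ i, X' i k ^ 2) := Real.sqrt_nonneg _
      have h4 : (0:ℝ) ≤ Real.sqrt (∑ i, X j i ^ 2) := Real.sqrt_nonneg _
      have h5 : (0:ℝ) ≤ a / Real.sqrt n := by positivity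
      exact mul_le_mul h1 h2 h3 h5
    have heq : (a / Real.sqrt n) * (b * (a / Real.sqrt n)) = a ^ 2 * b / n := by
      have : Real.sqrt n * Real.sqrt n = n := Real.mul_self_sqrt hn.le
      field_simp
      nlinarith [this]
    rw [hid]
    calc |(-(X j k) - ∑ i, X j i * X' i k)| ≤ |X j k| + |∑ i, X j i * X' i k| := by
          have h0 : -(X j k) - ∑ i, X j i * X' i k
              = -(X j k + ∑ i, X j i * X' i k) := by ring
          rw [h0, abs_neg]
          exact abs_add_le _ _
      _ ≤ a / n + a ^ 2 * b / n := by
          have := (hcs.trans hprod).trans_eq heq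
          exact add_le_add (hX j k) this
      _ = (a + a ^ 2 * b) / n := by ring
  -- row sums of A⁻¹
  have hrowsum : ∀ j, ∑ k, |A⁻¹ j k| ≤ 1 + a + a ^ 2 * b := by
    intro j
    have hnn : 0 < n := j.pos
    have hn : (0:ℝ) < n := by exact_mod_cast hnn
    have hsingle : ∑ k, |(1 : Matrix (Fin n) (Fin n) ℝ) j k| = 1 := by
      have : ∀ k, |(1 : Matrix (Fin n) (Fin n) ℝ) j k| = if k = j then (1:ℝ) else 0 := by
        intro k
        rcases eq_or_ne k j with rfl | h
        · simp [Matrix.one_apply]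
        · simp [Matrix.one_apply, h, Ne.symm h]
      simp only [this]
      simp
    calc ∑ k, |A⁻¹ j k| = ∑ k, |(1 : Matrix (Fin n) (Fin n) ℝ) j k + X' j k| := by
          refine Finset.sum_congr rfl fun k _ => ?_
          congr 1
          simp [hX'def, Matrix.sub_apply]
      _ ≤ ∑ k, (|(1 : Matrix (Fin n) (Fin n) ℝ) j k| + |X' j k|) :=
          Finset.sum_le_sum fun k _ => abs_add_le _ _
      _ = ∑ k, |(1 : Matrix (Fin n) (Fin n) ℝ) j k| + ∑ k, |X' j k| :=
          Finset.sum_add_distrib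
      _ ≤ 1 + ∑ k, |X' j k| := by rw [hsingle]
      _ ≤ 1 + (a + a ^ 2 * b) := by
          have : ∑ k, |X' j k| ≤ ∑ _k : Fin n, (a + a ^ 2 * b) / n :=
            Finset.sum_le_sum fun k _ => hentry j k
          have h2 : ∑ _k : Fin n, (a + a ^ 2 * b) / n = a + a ^ 2 * b := by
            simp only [Finset.sum_const, Finset.card_univ, Fintype.card_fin, nsmul_eq_mul]
            field_simp
          linarith [this.trans_eq h2]
      _ = 1 + a + a ^ 2 * b := by ring
  refine ⟨⟨?_, ?_⟩, ?_⟩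
  · -- equality of ∞ and 1 operator norms, by symmetry of A⁻¹
    rw [opNorm_top_eq, opNorm_one_eq]
    have hinvsym : ∀ i j, A⁻¹ i j = A⁻¹ j i := by
      intro i j
      have : A⁻¹ᵀ = A⁻¹ := by
        rw [Matrix.transpose_nonsing_inv, hsym]
      have h2 := congrFun (congrFun this j) i
      simpa [Matrix.transpose_apply] using h2
    refine iSup_congr fun j => ?_
    refine Finset.sum_congr rfl fun k _ => ?_
    rw [hinvsym j k]
  · rw [opNorm_top_eq]
    exact Real.iSup_le hrowsum (by positivity)
  · intro j k
    have hnn : 0 < n := j.pos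
    have hn : (0:ℝ) < n := by exact_mod_cast hnn
    have h1 : |(A⁻¹ - 1) j k| = |X' j k| := by rw [hX'def]
    rw [h1]
    refine (hentry j k).trans ?_
    have h2 : a + a ^ 2 * b ≤ 1 + a + a ^ 2 * b := by linarith
    exact (div_le_div_iff_of_pos_right hn).mpr h2
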